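/- Let P be the PCA on {0,1}^Z of a given neighborhood V and transition function f, let D_n = {−n, …, n}, and let P(ν, D_n) be the finite non-homogeneous restriction of P to domain D_n with i.i.d. boundary of law ν_n. Suppose μ_n is an invariant measure of P(ν_n, D_n), extended to a measure μ̃_n on {0,1}^Z by fixing all cells outside the domain to a constant letter a. Then any weak accumulation point of the sequence (μ̃_n) is an invariant measure of P on {0,1}^Z. -/

import Mathlib

open MeasureTheory Filter Topology Pointwise
open scoped ENNReal

/-- Any weak accumulation point (along cylinder probabilities) of invariant
measures of the finite non-homogeneous restrictions `P(ν_n, D_n)` of a PCA `P`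
on `{0,1}^ℤ` (with `D_n = {-n,…,n}`, i.i.d. boundary of law `ν_n`, and cells
outside `V̄(D_n)` frozen at the constant letter `a`) is an invariant measure of
`P` itself.  `κ` is the one-step kernel of `P` and `κn n` the kernel of the
`n`-th restriction, both characterized on cylinders. -/
lemma cylMeas16 (K : Finset ℤ) (y : ℤ → Bool) :
    MeasurableSet {z : ℤ → Bool | ∀ k ∈ K, z k = y k} := by
  have h : {z : ℤ → Bool | ∀ k ∈ K, z k = y k}
      = ⋂ k ∈ (K : Set ℤ), (fun z : ℤ → Bool => z k) ⁻¹' {y k} := by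
    ext z; simp
  rw [h]
  exact MeasurableSet.biInter K.countable_toSet fun k _ =>
    (measurable_pi_apply k) (measurableSet_singleton _)

lemma pi_gen16 :
    (inferInstance : MeasurableSpace (ℤ → Bool)) =
      MeasurableSpace.generateFrom
        {s | ∃ (K : Finset ℤ) (y : ℤ → Bool), s = {z | ∀ k ∈ K, z k = y k}} := by
  apply le_antisymm
  · rw [MeasurableSpace.pi]
    refine iSup_le fun k => ?_
    rw [MeasurableSpace.comap_le_iff_le_map]
    intro S _
    show MeasurableSet[MeasurableSpace.generateFrom _] ((fun z : ℤ → Bool => z k) ⁻¹' S)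
    have h : (fun z : ℤ → Bool => z k) ⁻¹' S = ⋃ b ∈ S, {z : ℤ → Bool | ∀ j ∈ ({k} : Finset ℤ), z j = b} := by
      ext z; simp
    rw [h]
    refine MeasurableSet.biUnion (Set.to_countable _) fun b _ =>
      MeasurableSpace.measurableSet_generateFrom ⟨{k}, fun _ => b, rfl⟩
  · refine MeasurableSpace.generateFrom_le fun s hs => ?_
    obtain ⟨K, y, rfl⟩ := hs
    exact cylMeas16 K y

lemma isPi16 : IsPiSystem
    {s : Set (ℤ → Bool) | ∃ (K : Finset ℤ) (y : ℤ → Bool), s = {z | ∀ k ∈ K, z k = y k}} := by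
  rintro s ⟨K, y, rfl⟩ t ⟨K', y', rfl⟩ ⟨z, hz1, hz2⟩
  refine ⟨K ∪ K', z, ?_⟩
  ext w
  simp only [Set.mem_inter_iff, Set.mem_setOf_eq, Finset.mem_union]
  constructor
  · rintro ⟨h1, h2⟩ k hk
    rcases hk with hk | hk
    · rw [h1 k hk, ← hz1 k hk]
    · rw [h2 k hk, ← hz2 k hk]
  · intro h
    exact ⟨fun k hk => by rw [h k (Or.inl hk), hz1 k hk],
      fun k hk => by rw [h k (Or.inr hk), hz2 k hk]⟩

lemma lintegral_cyl16 (S : Finset ℤ) (g : (ℤ → Bool) → ℝ≥0∞)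
    (hg : ∀ x x' : ℤ → Bool, (∀ k ∈ S, x k = x' k) → g x = g x')
    (μ : Measure (ℤ → Bool)) :
    ∫⁻ x, g x ∂μ =
      ∑ w : (↑S → Bool),
        g (fun k => if h : k ∈ S then w ⟨k, h⟩ else false) *
          μ {z | ∀ k ∈ S, z k = (fun k => if h : k ∈ S then w ⟨k, h⟩ else false) k} := by
  classical
  set E : (↑S → Bool) → ℤ → Bool := fun w k => if h : k ∈ S then w ⟨k, h⟩ else false with hE
  have hrep : ∀ z, g z = ∑ w : (↑S → Bool),
      Set.indicator {z' | ∀ k ∈ S, z' k = E w k} (fun _ => g (E w)) z := by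
    intro z
    rw [Finset.sum_eq_single (fun s : ↑S => z s.1)]
    · rw [Set.indicator_of_mem]
      · exact hg _ _ fun k hk => by simp [hE, hk]
      · intro k hk; simp [hE, hk]
    · intro w _ hw
      refine Set.indicator_of_notMem (fun hz => hw ?_) _
      funext s
      have := hz s.1 s.2
      simp only [hE, dif_pos s.2, Subtype.coe_eta] at this
      exact this.symm
    · intro h; exact absurd (Finset.mem_univ _) h
  rw [lintegral_congr hrep, lintegral_finset_sum]
  · exact Finset.sum_congr rfl fun w _ => lintegral_indicator_const (cylMeas16 S (E w)) _
  · intro w _; exact Measurable.indicator measurable_const (cylMeas16 S (E w))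

theorem stmt16
    (V : Finset ℤ)
    (f : (V → Bool) → Bool → ℝ≥0∞) (hf : ∀ x, f x false + f x true = 1)
    (ν : ℕ → Bool → ℝ≥0∞) (hν : ∀ n, ν n false + ν n true = 1)
    (a : Bool)
    (κ : (ℤ → Bool) → Measure (ℤ → Bool)) (hκm : Measurable κ)
    (hκ : ∀ (x : ℤ → Bool) (K : Finset ℤ) (y : ℤ → Bool),
      κ x {z | ∀ k ∈ K, z k = y k} = ∏ k ∈ K, f (fun v : V => x (k + v.1)) (y k))
    (κn : ℕ → (ℤ → Bool) → Measure (ℤ → Bool)) (hκnm : ∀ n, Measurable (κn n))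
    (hκn : ∀ (n : ℕ) (x : ℤ → Bool) (K : Finset ℤ) (y : ℤ → Bool),
      κn n x {z | ∀ k ∈ K, z k = y k} =
        ∏ k ∈ K,
          (if k ∈ Finset.Icc (-(n:ℤ)) n then f (fun v : V => x (k + v.1)) (y k)
           else if k ∈ Finset.Icc (-(n:ℤ)) n ∪ (Finset.Icc (-(n:ℤ)) n + V) then ν n (y k)
           else if y k = a then 1 else 0))
    (μ : ℕ → Measure (ℤ → Bool)) (hμprob : ∀ n, IsProbabilityMeasure (μ n))
    (hinv : ∀ n, Measure.bind (μ n) (κn n) = μ n)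
    (hsupp : ∀ (n : ℕ) (k : ℤ),
      k ∉ Finset.Icc (-(n:ℤ)) n ∪ (Finset.Icc (-(n:ℤ)) n + V) → μ n {z | z k ≠ a} = 0)
    (μlim : Measure (ℤ → Bool)) (hμlim : IsProbabilityMeasure μlim)
    (φ : ℕ → ℕ) (hφ : StrictMono φ)
    (hconv : ∀ (K : Finset ℤ) (y : ℤ → Bool),
      Tendsto (fun j => μ (φ j) {z | ∀ k ∈ K, z k = y k}) atTop
        (𝓝 (μlim {z | ∀ k ∈ K, z k = y k}))) :
    Measure.bind μlim κ = μlim := by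

  classical
  have main : ∀ (K : Finset ℤ) (y : ℤ → Bool),
      (μlim.bind κ) {z | ∀ k ∈ K, z k = y k} = μlim {z | ∀ k ∈ K, z k = y k} := by
    intro K y
    set C : Set (ℤ → Bool) := {z | ∀ k ∈ K, z k = y k} with hC
    set g : (ℤ → Bool) → ℝ≥0∞ := fun x => ∏ k ∈ K, f (fun v : V => x (k + v.1)) (y k)
      with hgdef
    set S : Finset ℤ := K + V with hS
    set E : (↑S → Bool) → ℤ → Bool := fun w k => if h : k ∈ S then w ⟨k, h⟩ else false
      with hE
    have hg : ∀ x x' : ℤ → Bool, (∀ k ∈ S, x k = x' k) → g x = g x' := by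
      intro x x' hxx'
      refine Finset.prod_congr rfl fun k hk => ?_
      congr 1
      funext v
      exact hxx' (k + v.1) (Finset.add_mem_add hk v.2)
    have hgle : ∀ x, g x ≤ 1 := by
      intro x
      refine Finset.prod_le_one (fun k _ => zero_le) fun k _ => ?_
      cases hyk : y k
      · rw [← hf (fun v : V => x (k + v.1))]; exact le_self_add
      · rw [← hf (fun v : V => x (k + v.1))]; exact le_add_self
    have hbind : (μlim.bind κ) C =
        ∑ w : (↑S → Bool), g (E w) * μlim {z | ∀ k ∈ S, z k = E w k} := by
      rw [Measure.bind_apply (cylMeas16 K y) hκm.aemeasurable]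
      rw [lintegral_congr fun x => hκ x K y]
      exact lintegral_cyl16 S g hg μlim
    have hfin : ∀ n : ℕ, K ⊆ Finset.Icc (-(n:ℤ)) n → μ n C =
        ∑ w : (↑S → Bool), g (E w) * μ n {z | ∀ k ∈ S, z k = E w k} := by
      intro n hKn
      conv_lhs => rw [← hinv n]
      rw [Measure.bind_apply (cylMeas16 K y) (hκnm n).aemeasurable]
      have hp : ∀ x, κn n x C = g x := by
        intro x
        rw [hκn n x K y]
        exact Finset.prod_congr rfl fun k hk => if_pos (hKn hk)
      rw [lintegral_congr hp]
      exact lintegral_cyl16 S g hg (μ n)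
    set N : ℕ := K.sup fun k => k.natAbs with hN
    have hKN : ∀ n : ℕ, N ≤ n → K ⊆ Finset.Icc (-(n:ℤ)) n := by
      intro n hn k hk
      have h1 : k.natAbs ≤ n := le_trans (Finset.le_sup hk) hn
      rw [Finset.mem_Icc]
      omega
    have heq : (fun j => μ (φ j) C) =ᶠ[atTop]
        (fun j => ∑ w : (↑S → Bool), g (E w) * μ (φ j) {z | ∀ k ∈ S, z k = E w k}) :=
      eventually_atTop.2 ⟨N, fun j hj =>
        hfin (φ j) (hKN _ (le_trans hj (hφ.le_apply)))⟩
    have h2 : Tendsto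
        (fun j => ∑ w : (↑S → Bool), g (E w) * μ (φ j) {z | ∀ k ∈ S, z k = E w k})
        atTop (𝓝 (∑ w : (↑S → Bool), g (E w) * μlim {z | ∀ k ∈ S, z k = E w k})) :=
      tendsto_finset_sum _ fun w _ =>
        ENNReal.Tendsto.const_mul (hconv S (E w))
          (Or.inr (lt_of_le_of_lt (hgle _) ENNReal.one_lt_top).ne)
    have hlim : μlim C =
        ∑ w : (↑S → Bool), g (E w) * μlim {z | ∀ k ∈ S, z k = E w k} :=
      tendsto_nhds_unique (hconv K y) (h2.congr' heq.symm)
    rw [hbind, ← hlim]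
  have huniv : (μlim.bind κ) Set.univ = μlim Set.univ := by
    have h := main ∅ (fun _ => false)
    simpa using h
  have hfinb : IsFiniteMeasure (μlim.bind κ) :=
    ⟨by rw [huniv]; exact measure_lt_top μlim _⟩
  refine ext_of_generate_finite _ pi_gen16 isPi16 ?_ huniv
  rintro s ⟨K, y, rfl⟩
  exact main K y
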